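/- arXiv:2208.03687 — 5 statements merged into one kernel-verified Lean document; each statement's English description precedes it below -/
import Mathlib

section
/- Let X and Y be real normed vector spaces and let f : X → Y be Hadamard semidifferentiable at x ∈ X with semiderivative function d(v) = d_H f(x)[v]. Then d is sequentially continuous: for every sequence (vₙ) in X with vₙ → v one has d(vₙ) → d(v) in Y. -/
open Filter Topology

/-- `f` is Hadamard semidifferentiable at `x` in the direction `v` with semiderivative `w`. -/
def HadamardSemidiffAt {X Y : Type*} [NormedAddCommGroup X] [NormedSpace ℝ X]
    [NormedAddCommGroup Y] [NormedSpace ℝ Y] (f : X → Y) (x v : X) (w : Y) : Prop :=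
  ∀ h : ℝ → X, h 0 = x →
    Tendsto (fun t => t⁻¹ • (h t - x)) (𝓝[>] (0 : ℝ)) (𝓝 v) →
    Tendsto (fun t => t⁻¹ • (f (h t) - f x)) (𝓝[>] (0 : ℝ)) (𝓝 w)

/-- The Hadamard semiderivative `v ↦ d_H f(x)[v]` of a Hadamard semidifferentiable function
is sequentially continuous. -/
theorem hadamard_semideriv_sequentiallyContinuous
    {X Y : Type*} [NormedAddCommGroup X] [NormedSpace ℝ X]
    [NormedAddCommGroup Y] [NormedSpace ℝ Y]
    (f : X → Y) (x : X) (d : X → Y)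
    (hdiff : ∀ v : X, HadamardSemidiffAt f x v (d v)) :
    ∀ (u : ℕ → X) (v : X), Tendsto u atTop (𝓝 v) →
      Tendsto (fun n => d (u n)) atTop (𝓝 (d v)) := by
  intro u v huv
  -- Step 1: for each n, choose a small `t` with small error in direction `u n`.
  have key : ∀ (n : ℕ) (b : ℝ), 0 < b → ∃ t : ℝ, 0 < t ∧ t < b ∧ t < 1/(n+1) ∧
      ‖t⁻¹ • (f (x + t • u n) - f x) - d (u n)‖ < 1/(n+1) := by
    intro n b hb
    have hd : Tendsto (fun t : ℝ => t⁻¹ • (f (x + t • u n) - f x)) (𝓝[>] (0:ℝ))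
        (𝓝 (d (u n))) := by
      apply hdiff (u n) (fun t => x + t • u n) (by simp)
      have heq : (fun t : ℝ => t⁻¹ • ((x + t • u n) - x)) =ᶠ[𝓝[>] (0:ℝ)]
          (fun _ => u n) := by
        filter_upwards [self_mem_nhdsWithin] with t ht
        have ht' : (t:ℝ) ≠ 0 := ne_of_gt ht
        simp [smul_smul, inv_mul_cancel₀ ht']
      exact Tendsto.congr' heq.symm tendsto_const_nhds
    have hpos : (0:ℝ) < 1/(n+1) := by positivity
    rw [Metric.tendsto_nhdsWithin_nhds] at hd
    obtain ⟨δ, hδ, hδ'⟩ := hd (1/(n+1)) hpos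
    refine ⟨min b (min δ (1/(n+1))) / 2, by positivity, ?_, ?_, ?_⟩
    · calc min b (min δ (1/(n+1))) / 2 < min b (min δ (1/(n+1))) := by
            have : (0:ℝ) < min b (min δ (1/(n+1))) := by positivity
            linarith
        _ ≤ b := min_le_left _ _
    · calc min b (min δ (1/(n+1))) / 2 < min b (min δ (1/(n+1))) := by
            have : (0:ℝ) < min b (min δ (1/(n+1))) := by positivity
            linarith
        _ ≤ 1/(n+1) := le_trans (min_le_right _ _) (min_le_right _ _)
    · have h1 : min b (min δ (1/(n+1))) / 2 ∈ Set.Ioi (0:ℝ) := by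
        simp only [Set.mem_Ioi]; positivity
      have h2 : dist (min b (min δ (1/(n+1))) / 2) 0 < δ := by
        rw [Real.dist_eq, sub_zero, abs_of_pos (by positivity)]
        calc min b (min δ (1/(n+1))) / 2 < min b (min δ (1/(n+1))) := by
              have : (0:ℝ) < min b (min δ (1/(n+1))) := by positivity
              linarith
          _ ≤ δ := le_trans (min_le_right _ _) (min_le_left _ _)
      have := hδ' h1 h2
      rwa [dist_eq_norm] at this
  choose F hF0 hFb hF1 hFe using key
  -- Step 2: recursively build a strictly decreasing sequence of times.
  let S : ℕ → {r : ℝ // 0 < r} := fun n => Nat.rec ⟨F 0 1 one_pos, hF0 0 1 one_pos⟩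
    (fun k p => ⟨F (k+1) p.1 p.2, hF0 (k+1) p.1 p.2⟩) n
  set s : ℕ → ℝ := fun n => (S n).1 with hs
  have hspos : ∀ n, 0 < s n := fun n => (S n).2
  have hstep : ∀ n, s (n+1) < s n := fun n => hFb (n+1) (s n) (hspos n)
  have hsmall : ∀ n, s n < 1/(n+1) := by
    intro n
    cases n with
    | zero => exact hF1 0 1 one_pos
    | succ k => exact hF1 (k+1) (s k) (hspos k)
  have herr : ∀ n, ‖(s n)⁻¹ • (f (x + s n • u n) - f x) - d (u n)‖ < 1/(n+1) := by
    intro n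
    cases n with
    | zero => exact hFe 0 1 one_pos
    | succ k => exact hFe (k+1) (s k) (hspos k)
  have hanti : StrictAnti s := strictAnti_nat_of_succ_lt hstep
  have hinj : Function.Injective s := hanti.injective
  -- s → 0
  have hs0 : Tendsto s atTop (𝓝 0) := by
    have h1 : Tendsto (fun n : ℕ => 1/((n:ℝ)+1)) atTop (𝓝 0) :=
      tendsto_one_div_add_atTop_nhds_zero_nat
    exact squeeze_zero (fun n => (hspos n).le) (fun n => (hsmall n).le) h1
  have hsIoi : Tendsto s atTop (𝓝[>] (0:ℝ)) :=
    tendsto_nhdsWithin_of_tendsto_nhds_of_eventually_within s hs0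
      (Eventually.of_forall fun n => hspos n)
  -- Step 3: define the trajectory.
  classical
  let g : ℝ → X := fun r => if hr : ∃ n, s n = r then u hr.choose else v
  let h : ℝ → X := fun r => x + r • g r
  have hg_at : ∀ n, g (s n) = u n := by
    intro n
    have hex : ∃ m, s m = s n := ⟨n, rfl⟩
    have : hex.choose = n := hinj hex.choose_spec
    simp only [g, dif_pos hex, this]
  have hg_tendsto : Tendsto g (𝓝[>] (0:ℝ)) (𝓝 v) := by
    rw [Metric.tendsto_nhdsWithin_nhds]
    intro ε hε
    obtain ⟨N, hN⟩ := (Metric.tendsto_atTop.mp huv) ε hε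
    refine ⟨s N, hspos N, ?_⟩
    intro r hr hrd
    rw [Real.dist_eq, sub_zero, abs_of_pos hr] at hrd
    by_cases hex : ∃ n, s n = r
    · have hchoose := hex.choose_spec
      have hlt : s hex.choose < s N := by rw [hchoose]; exact hrd
      have hge : N ≤ hex.choose := by
        by_contra hcon
        push_neg at hcon
        exact absurd (hanti hcon) (not_lt.mpr hlt.le)
      simp only [g, dif_pos hex]
      exact hN _ hge
    · simp only [g, dif_neg hex, dist_self]
      exact hε
  have hh0 : h 0 = x := by simp [h]
  have hh_traj : Tendsto (fun t => t⁻¹ • (h t - x)) (𝓝[>] (0:ℝ)) (𝓝 v) := by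
    have heq : (fun t : ℝ => t⁻¹ • (h t - x)) =ᶠ[𝓝[>] (0:ℝ)] g := by
      filter_upwards [self_mem_nhdsWithin] with t ht
      have ht' : (t:ℝ) ≠ 0 := ne_of_gt ht
      simp [h, smul_smul, inv_mul_cancel₀ ht']
    exact Tendsto.congr' heq.symm hg_tendsto
  -- Step 4: apply semidifferentiability along h and compose with s.
  have hF := hdiff v h hh0 hh_traj
  have hFs : Tendsto (fun n => (s n)⁻¹ • (f (h (s n)) - f x)) atTop (𝓝 (d v)) :=
    hF.comp hsIoi
  have hFs' : Tendsto (fun n => (s n)⁻¹ • (f (x + s n • u n) - f x)) atTop (𝓝 (d v)) := by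
    refine hFs.congr fun n => ?_
    simp only [h, hg_at n]
  -- Step 5: conclude.
  have hdiff0 : Tendsto (fun n => (s n)⁻¹ • (f (x + s n • u n) - f x) - d (u n)) atTop
      (𝓝 0) := by
    refine squeeze_zero_norm (fun n => (herr n).le) tendsto_one_div_add_atTop_nhds_zero_nat
  have := hFs'.sub hdiff0
  simp only [sub_sub_cancel, sub_zero] at this
  exact this
end

section
/- (Chain rule for Hadamard semiderivatives.) Let X, Y, Z be real normed vector spaces, let x, v ∈ X, let g : X → Y be Hadamard semidifferentiable at x in the direction v with semiderivative w ∈ Y, and let f : Y → Z be Hadamard semidifferentiable at g(x) in the direction w with semiderivative z ∈ Z. Then f ∘ g is Hadamard semidifferentiable at x in the direction v with semiderivative z. -/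
open Filter Topology

/-- Chain rule for Hadamard semiderivatives:
`d_H(f ∘ g)(x)[v] = d_H f(g(x))[d_H g(x)[v]]`. -/
theorem hadamard_semideriv_chain_rule
    {X Y Z : Type*} [NormedAddCommGroup X] [NormedSpace ℝ X]
    [NormedAddCommGroup Y] [NormedSpace ℝ Y]
    [NormedAddCommGroup Z] [NormedSpace ℝ Z]
    (g : X → Y) (f : Y → Z) (x v : X) (w : Y) (z : Z)
    (hg : HadamardSemidiffAt g x v w)
    (hf : HadamardSemidiffAt f (g x) w z) :
    HadamardSemidiffAt (f ∘ g) x v z := by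
  intro h h0 ht
  have h1 := hg h h0 ht
  have h2 := hf (g ∘ h) (by simp [Function.comp, h0]) h1
  simpa [Function.comp] using h2
end

section
/- (Material semiderivative of a gradient inner product.) Fix n ∈ ℕ, a vector field V : ℝⁿ → ℝⁿ, and set F_t(x) = x + t·V(x). Let (g_t)_{t≥0} and (q_t)_{t≥0} be families of functions ℝⁿ → ℝ, differentiable at F_t(x) for all small t ≥ 0, and let x ∈ ℝⁿ. Suppose the Hadamard material semiderivatives D_{Hm}g(y), D_{Hm}q(y) exist near x and are partially differentiable at x, and suppose that for each i ∈ {1, …, n} the limits lim_{t→0⁺} (∂_i g_t(F_t(x)) − ∂_i g_0(x))/t and lim_{t→0⁺} (∂_i q_t(F_t(x)) − ∂_i q_0(x))/t exist and equal ∂_i(D_{Hm}g)(x) − Σ_{l=1}^n ∂_l g_0(x)·∂_i V_l(x) and ∂_i(D_{Hm}q)(x) − Σ_{l=1}^n ∂_l q_0(x)·∂_i V_l(x), respectively. Then the family t ↦ Σ_{i=1}^n ∂_i g_t · ∂_i q_t has a Hadamard material semiderivative at x given by lim_{t→0⁺} (Σ_i ∂_i g_t(F_t(x))·∂_i q_t(F_t(x))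 − Σ_i ∂_i g_0(x)·∂_i q_0(x))/t = Σ_i ∂_i g_0(x)·∂_i(D_{Hm}q)(x) + Σ_i ∂_i q_0(x)·∂_i(D_{Hm}g)(x) − Σ_{i,l} (∂_l g_0(x)·∂_i q_0(x) + ∂_i g_0(x)·∂_l q_0(x))·∂_i V_l(x), i.e. D_{Hm}(∇g·∇q)(x) = ∇g(x)ᵀ∇(D_{Hm}q)(x) − ∇g(x)ᵀ(DV(x) + DV(x)ᵀ)∇q(x) + ∇q(x)ᵀ∇(D_{Hm}g)(x). -/
open Filter Topology

/-- The `i`-th partial derivative of `f : ℝⁿ → ℝ` at `x`. -/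
noncomputable def pderiv' (n : ℕ) (i : Fin n) (f : (Fin n → ℝ) → ℝ) (x : Fin n → ℝ) : ℝ :=
  fderiv ℝ f x (Pi.single i 1)


open Filter Topology in
private lemma aux_alg {n : ℕ} (a0 b0 PG PQ : Fin n → ℝ) (C : Fin n → Fin n → ℝ) :
    (∑ i, ((PG i - ∑ l, a0 l * C i l) * b0 i + a0 i * (PQ i - ∑ l, b0 l * C i l)))
      = (∑ i, a0 i * PQ i) + (∑ i, b0 i * PG i)
        - ∑ i, ∑ l, (a0 l * b0 i + a0 i * b0 l) * C i l := by
  have h : ∀ i, (PG i - ∑ l, a0 l * C i l) * b0 i + a0 i * (PQ i - ∑ l, b0 l * C i l)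
      = a0 i * PQ i + b0 i * PG i - ∑ l, (a0 l * b0 i + a0 i * b0 l) * C i l := by
    intro i
    have e : ∑ l, (a0 l * b0 i + a0 i * b0 l) * C i l
        = (∑ l, a0 l * C i l) * b0 i + a0 i * ∑ l, b0 l * C i l := by
      rw [Finset.sum_mul, Finset.mul_sum, ← Finset.sum_add_distrib]
      exact Finset.sum_congr rfl fun l _ => by ring
    rw [e]; ring
  simp only [h, Finset.sum_sub_distrib, Finset.sum_add_distrib]

open Filter Topology in
private lemma aux_tendsto {n : ℕ} (a b : ℝ → Fin n → ℝ) (a0 b0 A B : Fin n → ℝ)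
    (hA : ∀ i, Tendsto (fun t => (a t i - a0 i) / t) (𝓝[>] (0:ℝ)) (𝓝 (A i)))
    (hB : ∀ i, Tendsto (fun t => (b t i - b0 i) / t) (𝓝[>] (0:ℝ)) (𝓝 (B i))) :
    Tendsto (fun t => ((∑ i, a t i * b t i) - ∑ i, a0 i * b0 i) / t) (𝓝[>] (0:ℝ))
      (𝓝 (∑ i, (A i * b0 i + a0 i * B i))) := by
  have htend : Tendsto (fun t : ℝ => t) (𝓝[>] (0:ℝ)) (𝓝 0) :=
    tendsto_id.mono_left nhdsWithin_le_nhds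
  have hpos : ∀ᶠ t in 𝓝[>] (0:ℝ), (0:ℝ) < t := eventually_mem_nhdsWithin
  have hb0 : ∀ i, Tendsto (fun t => b t i) (𝓝[>] (0:ℝ)) (𝓝 (b0 i)) := by
    intro i
    have h1 : Tendsto (fun t : ℝ => t * ((b t i - b0 i) / t) + b0 i) (𝓝[>] (0:ℝ))
        (𝓝 (0 * B i + b0 i)) := (htend.mul (hB i)).add tendsto_const_nhds
    rw [zero_mul, zero_add] at h1
    refine h1.congr' ?_
    filter_upwards [hpos] with t ht
    field_simp
    ring
  have L : Tendsto (fun t => ∑ i, ((a t i - a0 i) / t * b t i + a0 i * ((b t i - b0 i) / t)))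
      (𝓝[>] (0:ℝ)) (𝓝 (∑ i, (A i * b0 i + a0 i * B i))) :=
    tendsto_finset_sum _ fun i _ =>
      ((hA i).mul (hb0 i)).add (Tendsto.const_mul _ (hB i))
  refine L.congr' ?_
  filter_upwards [hpos] with t ht
  rw [← Finset.sum_sub_distrib, Finset.sum_div]
  refine Finset.sum_congr rfl fun i _ => ?_
  field_simp
  ring

/-- Material semiderivative of a gradient inner product:
`D_{Hm}(∇g·∇q)(x) = ∇g(x)ᵀ∇(D_{Hm}q)(x) − ∇g(x)ᵀ(DV(x)+DV(x)ᵀ)∇q(x) + ∇q(x)ᵀ∇(D_{Hm}g)(x)`. -/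
theorem hadamard_material_semideriv_gradient_product
    (n : ℕ) (V : (Fin n → ℝ) → (Fin n → ℝ)) (x : Fin n → ℝ)
    (g q : ℝ → (Fin n → ℝ) → ℝ) (τ : ℝ) (hτ : 0 < τ)
    (hgdiff : ∀ t ∈ Set.Ico (0 : ℝ) τ, DifferentiableAt ℝ (g t) (x + t • V x))
    (hqdiff : ∀ t ∈ Set.Ico (0 : ℝ) τ, DifferentiableAt ℝ (q t) (x + t • V x))
    (Dmg Dmq : (Fin n → ℝ) → ℝ)
    -- the material semiderivatives exist near `x`
    (hg : ∀ᶠ y in 𝓝 x,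
      Tendsto (fun t => (g t (y + t • V y) - g 0 y) / t) (𝓝[>] (0 : ℝ)) (𝓝 (Dmg y)))
    (hq : ∀ᶠ y in 𝓝 x,
      Tendsto (fun t => (q t (y + t • V y) - q 0 y) / t) (𝓝[>] (0 : ℝ)) (𝓝 (Dmq y)))
    -- `D_{Hm}g` and `D_{Hm}q` are partially differentiable at `x`
    (pDmg pDmq : Fin n → ℝ)
    (hpg : ∀ i : Fin n, HasLineDerivAt ℝ Dmg (pDmg i) x (Pi.single i 1))
    (hpq : ∀ i : Fin n, HasLineDerivAt ℝ Dmq (pDmq i) x (Pi.single i 1))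
    -- the material semiderivatives of the partial derivatives exist and are given by
    -- `∂ᵢ(D_{Hm}g)(x) − Σₗ ∂ₗg₀(x)·∂ᵢVₗ(x)` (and likewise for `q`)
    (hcg : ∀ i : Fin n,
      Tendsto (fun t => (pderiv' n i (g t) (x + t • V x) - pderiv' n i (g 0) x) / t)
        (𝓝[>] (0 : ℝ))
        (𝓝 (pDmg i - ∑ l, pderiv' n l (g 0) x * pderiv' n i (fun y => V y l) x)))
    (hcq : ∀ i : Fin n,
      Tendsto (fun t => (pderiv' n i (q t) (x + t • V x) - pderiv' n i (q 0) x) / t)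
        (𝓝[>] (0 : ℝ))
        (𝓝 (pDmq i - ∑ l, pderiv' n l (q 0) x * pderiv' n i (fun y => V y l) x))) :
    Tendsto
      (fun t => ((∑ i, pderiv' n i (g t) (x + t • V x) * pderiv' n i (q t) (x + t • V x))
        - ∑ i, pderiv' n i (g 0) x * pderiv' n i (q 0) x) / t)
      (𝓝[>] (0 : ℝ))
      (𝓝 ((∑ i, pderiv' n i (g 0) x * pDmq i) + (∑ i, pderiv' n i (q 0) x * pDmg i)
        - ∑ i, ∑ l, (pderiv' n l (g 0) x * pderiv' n i (q 0) x
            + pderiv' n i (g 0) x * pderiv' n l (q 0) x) * pderiv' n i (fun y => V y l) x)) := by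
  have L := aux_tendsto (fun t i => pderiv' n i (g t) (x + t • V x))
    (fun t i => pderiv' n i (q t) (x + t • V x))
    (fun i => pderiv' n i (g 0) x) (fun i => pderiv' n i (q 0) x)
    (fun i => pDmg i - ∑ l, pderiv' n l (g 0) x * pderiv' n i (fun y => V y l) x)
    (fun i => pDmq i - ∑ l, pderiv' n l (q 0) x * pderiv' n i (fun y => V y l) x)
    hcg hcq
  rwa [aux_alg (fun i => pderiv' n i (g 0) x) (fun i => pderiv' n i (q 0) x) pDmg pDmq
    (fun i l => pderiv' n i (fun y => V y l) x)] at L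
end

section
/- (Material semiderivative of a bilinear-form integrand.) Fix n ∈ ℕ, a vector field V : ℝⁿ → ℝⁿ, and set F_t(x) = x + t·V(x). Let a_{ij}, d_i, b : ℝⁿ → ℝ (1 ≤ i, j ≤ n) be coefficient functions, (g_t)_{t≥0}, (q_t)_{t≥0} families of functions ℝⁿ → ℝ differentiable at F_t(x) for small t ≥ 0, and x ∈ ℝⁿ. Assume: (a) each coefficient c ∈ {a_{ij}, d_i, b} satisfies lim_{t→0⁺} (c(F_t(x)) − c(x))/t = 0; (b) the Hadamard material semiderivatives D_{Hm}g(x) and D_{Hm}q(x) exist, D_{Hm}g and D_{Hm}q are defined near x and partially differentiable at x; (c) for each i, the limits lim_{t→0⁺} (∂_i g_t(F_t(x)) − ∂_i g_0(x))/t and lim_{t→0⁺} (∂_i q_t(F_t(x)) − ∂_i q_0(x))/t exist and equal ∂_i(D_{Hm}g)(x) − Σ_l ∂_l g_0(x)·∂_i V_l(x) and ∂_i(D_{Hm}q)(x) − Σ_l ∂_l q_0(x)·∂_i V_l(x), respectively. Define the integrand family χ_t(y) = Σ_{i,j} a_{ij}(y)·∂_i g_t(y)·∂_j q_t(y) + Σ_i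 d_i(y)·(∂_i g_t(y)·q_t(y) + g_t(y)·∂_i q_t(y)) + b(y)·g_t(y)·q_t(y). Then the Hadamard material semiderivative of (χ_t) at x exists and equals Σ_{i,j} a_{ij}(x)·[(∂_i(D_{Hm}g)(x) − Σ_l ∂_l g_0(x)·∂_i V_l(x))·∂_j q_0(x) + ∂_i g_0(x)·(∂_j(D_{Hm}q)(x) − Σ_l ∂_l q_0(x)·∂_j V_l(x))] + Σ_i d_i(x)·[(∂_i(D_{Hm}g)(x) − Σ_l ∂_l g_0(x)·∂_i V_l(x))·q_0(x) + ∂_i g_0(x)·D_{Hm}q(x) + D_{Hm}g(x)·∂_i q_0(x) + g_0(x)·(∂_i(D_{Hm}q)(x) − Σ_l ∂_l q_0(x)·∂_i V_l(x))] + b(x)·(D_{Hm}g(x)·q_0(x) + g_0(x)·D_{Hm}q(x)). -/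
open Filter Topology

/-- Semiderivative predicate: `(f t - f0)/t → f'` as `t → 0⁺`. -/
def SDq (f : ℝ → ℝ) (f0 f' : ℝ) : Prop :=
  Filter.Tendsto (fun t => (f t - f0) / t) (𝓝[>] (0 : ℝ)) (𝓝 f')

lemma SDq.base {f : ℝ → ℝ} {f0 f' : ℝ} (h : SDq f f0 f') :
    Filter.Tendsto f (𝓝[>] (0 : ℝ)) (𝓝 f0) := by
  have h2 : Filter.Tendsto (fun t => (f t - f0) / t * t) (𝓝[>] (0 : ℝ)) (𝓝 0) := by
    simpa using Filter.Tendsto.mul h (tendsto_id.mono_left nhdsWithin_le_nhds)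
  have h3 : Filter.Tendsto (fun t => f t - f0) (𝓝[>] (0 : ℝ)) (𝓝 0) := by
    refine Filter.Tendsto.congr' ?_ h2
    filter_upwards [self_mem_nhdsWithin] with t ht
    exact div_mul_cancel₀ _ (ne_of_gt ht)
  have := Filter.Tendsto.add h3 (tendsto_const_nhds (x := f0))
  simpa using this

lemma SDq.mul {f g : ℝ → ℝ} {f0 f' g0 g' : ℝ} (hf : SDq f f0 f') (hg : SDq g g0 g') :
    SDq (fun t => f t * g t) (f0 * g0) (f' * g0 + f0 * g') := by
  have h : Filter.Tendsto (fun t => (f t - f0) / t * g t + f0 * ((g t - g0) / t))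
      (𝓝[>] (0 : ℝ)) (𝓝 (f' * g0 + f0 * g')) :=
    Filter.Tendsto.add (Filter.Tendsto.mul hf hg.base) (Filter.Tendsto.mul tendsto_const_nhds hg)
  refine Filter.Tendsto.congr' ?_ h
  filter_upwards [self_mem_nhdsWithin] with t ht
  field_simp
  ring

lemma SDq.add {f g : ℝ → ℝ} {f0 f' g0 g' : ℝ} (hf : SDq f f0 f') (hg : SDq g g0 g') :
    SDq (fun t => f t + g t) (f0 + g0) (f' + g') := by
  have h := Filter.Tendsto.add hf hg
  refine (Filter.Tendsto.congr (fun t => ?_) h : _)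
  ring

lemma SDq.sum {ι : Type*} (s : Finset ι) {f : ι → ℝ → ℝ} {f0 f' : ι → ℝ}
    (h : ∀ i ∈ s, SDq (f i) (f0 i) (f' i)) :
    SDq (fun t => ∑ i ∈ s, f i t) (∑ i ∈ s, f0 i) (∑ i ∈ s, f' i) := by
  have h2 := tendsto_finset_sum s h
  refine (Filter.Tendsto.congr (fun t => ?_) h2 : _)
  rw [← Finset.sum_div, ← Finset.sum_sub_distrib]

/-- Material semiderivative of a bilinear-form integrand
`χ_t = Σ_{i,j} a_{ij} ∂ᵢg_t ∂ⱼq_t + Σᵢ dᵢ (∂ᵢg_t q_t + g_t ∂ᵢq_t) + b g_t q_t`. -/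
theorem hadamard_material_semideriv_bilinear_integrand
    (n : ℕ) (V : (Fin n → ℝ) → (Fin n → ℝ)) (x : Fin n → ℝ)
    (a : Fin n → Fin n → (Fin n → ℝ) → ℝ) (d : Fin n → (Fin n → ℝ) → ℝ)
    (b : (Fin n → ℝ) → ℝ)
    (g q : ℝ → (Fin n → ℝ) → ℝ) (τ : ℝ) (hτ : 0 < τ)
    (hgdiff : ∀ t ∈ Set.Ico (0 : ℝ) τ, DifferentiableAt ℝ (g t) (x + t • V x))
    (hqdiff : ∀ t ∈ Set.Ico (0 : ℝ) τ, DifferentiableAt ℝ (q t) (x + t • V x))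
    -- (a) the coefficient functions have vanishing material semiderivative at `x`
    (haa : ∀ i j : Fin n,
      Tendsto (fun t => (a i j (x + t • V x) - a i j x) / t) (𝓝[>] (0 : ℝ)) (𝓝 0))
    (had : ∀ i : Fin n,
      Tendsto (fun t => (d i (x + t • V x) - d i x) / t) (𝓝[>] (0 : ℝ)) (𝓝 0))
    (hab : Tendsto (fun t => (b (x + t • V x) - b x) / t) (𝓝[>] (0 : ℝ)) (𝓝 0))
    -- (b) the material semiderivatives of `g` and `q` exist near `x` and are
    -- partially differentiable at `x`
    (Dmg Dmq : (Fin n → ℝ) → ℝ)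
    (hg : ∀ᶠ y in 𝓝 x,
      Tendsto (fun t => (g t (y + t • V y) - g 0 y) / t) (𝓝[>] (0 : ℝ)) (𝓝 (Dmg y)))
    (hq : ∀ᶠ y in 𝓝 x,
      Tendsto (fun t => (q t (y + t • V y) - q 0 y) / t) (𝓝[>] (0 : ℝ)) (𝓝 (Dmq y)))
    (pDmg pDmq : Fin n → ℝ)
    (hpg : ∀ i : Fin n, HasLineDerivAt ℝ Dmg (pDmg i) x (Pi.single i 1))
    (hpq : ∀ i : Fin n, HasLineDerivAt ℝ Dmq (pDmq i) x (Pi.single i 1))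
    -- (c) the material semiderivatives of the partial derivatives exist and are given by
    -- `∂ᵢ(D_{Hm}g)(x) − Σₗ ∂ₗg₀(x)·∂ᵢVₗ(x)` (and likewise for `q`)
    (hcg : ∀ i : Fin n,
      Tendsto (fun t => (pderiv' n i (g t) (x + t • V x) - pderiv' n i (g 0) x) / t)
        (𝓝[>] (0 : ℝ))
        (𝓝 (pDmg i - ∑ l, pderiv' n l (g 0) x * pderiv' n i (fun y => V y l) x)))
    (hcq : ∀ i : Fin n,
      Tendsto (fun t => (pderiv' n i (q t) (x + t • V x) - pderiv' n i (q 0) x) / t)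
        (𝓝[>] (0 : ℝ))
        (𝓝 (pDmq i - ∑ l, pderiv' n l (q 0) x * pderiv' n i (fun y => V y l) x))) :
    Tendsto
      (fun t =>
        (((∑ i, ∑ j, a i j (x + t • V x)
              * pderiv' n i (g t) (x + t • V x) * pderiv' n j (q t) (x + t • V x))
          + (∑ i, d i (x + t • V x)
              * (pderiv' n i (g t) (x + t • V x) * q t (x + t • V x)
                + g t (x + t • V x) * pderiv' n i (q t) (x + t • V x)))
          + b (x + t • V x) * g t (x + t • V x) * q t (x + t • V x))
        - ((∑ i, ∑ j, a i j x * pderiv' n i (g 0) x * pderiv' n j (q 0) x)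
          + (∑ i, d i x * (pderiv' n i (g 0) x * q 0 x + g 0 x * pderiv' n i (q 0) x))
          + b x * g 0 x * q 0 x)) / t)
      (𝓝[>] (0 : ℝ))
      (𝓝 ((∑ i, ∑ j, a i j x
            * ((pDmg i - ∑ l, pderiv' n l (g 0) x * pderiv' n i (fun y => V y l) x)
                * pderiv' n j (q 0) x
              + pderiv' n i (g 0) x
                * (pDmq j - ∑ l, pderiv' n l (q 0) x * pderiv' n j (fun y => V y l) x)))
        + (∑ i, d i x
            * ((pDmg i - ∑ l, pderiv' n l (g 0) x * pderiv' n i (fun y => V y l) x) * q 0 x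
              + pderiv' n i (g 0) x * Dmq x
              + Dmg x * pderiv' n i (q 0) x
              + g 0 x * (pDmq i - ∑ l, pderiv' n l (q 0) x * pderiv' n i (fun y => V y l) x)))
        + b x * (Dmg x * q 0 x + g 0 x * Dmq x))) := by
  have hg0 : SDq (fun t => g t (x + t • V x)) (g 0 x) (Dmg x) := hg.self_of_nhds
  have hq0 : SDq (fun t => q t (x + t • V x)) (q 0 x) (Dmq x) := hq.self_of_nhds
  set Dg' : Fin n → ℝ :=
    fun i => pDmg i - ∑ l, pderiv' n l (g 0) x * pderiv' n i (fun y => V y l) x with hDg'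
  set Dq' : Fin n → ℝ :=
    fun i => pDmq i - ∑ l, pderiv' n l (q 0) x * pderiv' n i (fun y => V y l) x with hDq'
  have hA : SDq
      (fun t => ∑ i, ∑ j, a i j (x + t • V x)
          * pderiv' n i (g t) (x + t • V x) * pderiv' n j (q t) (x + t • V x))
      (∑ i, ∑ j, a i j x * pderiv' n i (g 0) x * pderiv' n j (q 0) x)
      (∑ i, ∑ j, (((0 : ℝ) * pderiv' n i (g 0) x + a i j x * Dg' i) * pderiv' n j (q 0) x
          + a i j x * pderiv' n i (g 0) x * Dq' j)) :=
    SDq.sum _ fun i _ => SDq.sum _ fun j _ => SDq.mul (SDq.mul (haa i j) (hcg i)) (hcq j)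
  have hB : SDq
      (fun t => ∑ i, d i (x + t • V x)
          * (pderiv' n i (g t) (x + t • V x) * q t (x + t • V x)
            + g t (x + t • V x) * pderiv' n i (q t) (x + t • V x)))
      (∑ i, d i x * (pderiv' n i (g 0) x * q 0 x + g 0 x * pderiv' n i (q 0) x))
      (∑ i, ((0 : ℝ) * (pderiv' n i (g 0) x * q 0 x + g 0 x * pderiv' n i (q 0) x)
          + d i x * ((Dg' i * q 0 x + pderiv' n i (g 0) x * Dmq x)
            + (Dmg x * pderiv' n i (q 0) x + g 0 x * Dq' i)))) :=
    SDq.sum _ fun i _ =>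
      SDq.mul (had i) (SDq.add (SDq.mul (hcg i) hq0) (SDq.mul hg0 (hcq i)))
  have hC : SDq (fun t => b (x + t • V x) * g t (x + t • V x) * q t (x + t • V x))
      (b x * g 0 x * q 0 x)
      (((0 : ℝ) * g 0 x + b x * Dmg x) * q 0 x + b x * g 0 x * Dmq x) :=
    SDq.mul (SDq.mul hab hg0) hq0
  have key := SDq.add (SDq.add hA hB) hC
  unfold SDq at key
  convert key using 2
  congr 1
  · congr 1
    · exact Finset.sum_congr rfl fun i _ => Finset.sum_congr rfl fun j _ => by ring
    · exact Finset.sum_congr rfl fun i _ => by ring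
  · ring
end

section
/- (Hadamard shape semiderivative of a domain integral.) Fix n ∈ ℕ, let Ω ⊆ ℝⁿ be a Lebesgue measurable set, and let V : ℝⁿ → ℝⁿ be continuously differentiable and globally Lipschitz with Lipschitz constant L > 0; set F_t(x) = x + t·V(x), so that F_t is injective for 0 ≤ t < 1/L and det(DF_t(x)) = det(I + t·DV(x)) > 0 on Ω for such t. Let (g_t)_{t≥0} be a family of Lebesgue measurable functions ℝⁿ → ℝ with g_0 integrable on Ω. Assume: (a) for almost every x ∈ Ω the Hadamard material semiderivative D_{Hm}g(x) = lim_{t→0⁺} (g_t(F_t(x)) − g_0(x))/t exists; (b) there exist δ ∈ (0, 1/L) and an integrable function G on Ω with |g_t(F_t(x))·det(I + t·DV(x)) − g_0(x)| ≤ t·G(x) for almost every x ∈ Ω and all t ∈ (0, δ]. Then lim_{t→0⁺} (1/t)·(∫_{F_t(Ω)} g_t(y) dy − ∫_Ω g_0(x) dx) = ∫_Ω (D_{Hm}g(x) + div V(x)·g_0(x)) dx, where F_t(Ω) denotes the image of Ω under F_t and div V = Σ_{i=1}^n ∂_i V_i. -/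
open Filter Topology MeasureTheory

section Aux

variable {n : ℕ}

private lemma detAux_eq (A : (Fin n → ℝ) →L[ℝ] (Fin n → ℝ)) (t : ℝ) :
    LinearMap.det (LinearMap.id + t • (A : (Fin n → ℝ) →ₗ[ℝ] (Fin n → ℝ)))
      = Matrix.det (1 + t • LinearMap.toMatrix' (A : (Fin n → ℝ) →ₗ[ℝ] (Fin n → ℝ))) := by
  rw [← LinearMap.det_toMatrix', map_add, _root_.map_smul, LinearMap.toMatrix'_id]

private lemma detAux_tendsto_one (A : (Fin n → ℝ) →L[ℝ] (Fin n → ℝ)) :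
    Tendsto (fun t : ℝ => LinearMap.det
      (LinearMap.id + t • (A : (Fin n → ℝ) →ₗ[ℝ] (Fin n → ℝ)))) (𝓝[>] 0) (𝓝 1) := by
  have hc : Continuous (fun t : ℝ => Matrix.det
      (1 + t • LinearMap.toMatrix' (A : (Fin n → ℝ) →ₗ[ℝ] (Fin n → ℝ)))) := by
    exact (continuous_const.add (continuous_id.smul continuous_const)).matrix_det
  have h0 : Matrix.det (1 + (0:ℝ) • LinearMap.toMatrix'
      (A : (Fin n → ℝ) →ₗ[ℝ] (Fin n → ℝ))) = 1 := by simp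
  simp only [detAux_eq]
  have := hc.tendsto 0
  rw [h0] at this
  exact this.mono_left nhdsWithin_le_nhds

private lemma detAux_diff_quot_tendsto (A : (Fin n → ℝ) →L[ℝ] (Fin n → ℝ)) :
    Tendsto (fun t : ℝ => (LinearMap.det
      (LinearMap.id + t • (A : (Fin n → ℝ) →ₗ[ℝ] (Fin n → ℝ))) - 1) / t)
      (𝓝[>] 0) (𝓝 (∑ i, A (Pi.single i 1) i)) := by
  set M := LinearMap.toMatrix' (A : (Fin n → ℝ) →ₗ[ℝ] (Fin n → ℝ)) with hM
  set p := (Matrix.det (1 + (Polynomial.X : Polynomial ℝ) • M.map Polynomial.C)).divX.divX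
    with hp
  have htr : M.trace = ∑ i, A (Pi.single i 1) i := by
    simp only [Matrix.trace, Matrix.diag, hM, LinearMap.toMatrix'_apply]
    refine Finset.sum_congr rfl fun i _ => ?_
    have hv : (fun j' : Fin n => if j' = i then (1:ℝ) else 0) = Pi.single i 1 := by
      ext j'; simp [Pi.single_apply]
    rfl
  have hkey : ∀ t : ℝ, t ≠ 0 → (LinearMap.det
      (LinearMap.id + t • (A : (Fin n → ℝ) →ₗ[ℝ] (Fin n → ℝ))) - 1) / t
      = M.trace + p.eval t * t := by
    intro t ht
    rw [detAux_eq, Matrix.det_one_add_smul t M, ← hp]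
    field_simp
    ring
  have hc : Tendsto (fun t : ℝ => M.trace + p.eval t * t) (𝓝 0) (𝓝 (M.trace)) := by
    have : Continuous fun t : ℝ => M.trace + p.eval t * t :=
      continuous_const.add (p.continuous.mul continuous_id)
    simpa using this.tendsto 0
  rw [← htr]
  refine Tendsto.congr' ?_ (hc.mono_left nhdsWithin_le_nhds)
  filter_upwards [self_mem_nhdsWithin] with t ht
  exact (hkey t (ne_of_gt ht)).symm

private lemma detAux_continuous (V : (Fin n → ℝ) → (Fin n → ℝ)) (hV : ContDiff ℝ 1 V)
    (t : ℝ) : Continuous (fun x => LinearMap.det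
      (LinearMap.id + t • ((fderiv ℝ V x : (Fin n → ℝ) →L[ℝ] (Fin n → ℝ))
        : (Fin n → ℝ) →ₗ[ℝ] (Fin n → ℝ)))) := by
  have hf : Continuous (fderiv ℝ V) := hV.continuous_fderiv one_ne_zero
  have hMc : Continuous fun x => LinearMap.toMatrix'
      ((fderiv ℝ V x : (Fin n → ℝ) →L[ℝ] (Fin n → ℝ)) : (Fin n → ℝ) →ₗ[ℝ] (Fin n → ℝ)) := by
    refine continuous_matrix fun i j => ?_
    have h1 : Continuous fun x => fderiv ℝ V x (Pi.single j 1) :=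
      ((ContinuousLinearMap.apply ℝ (Fin n → ℝ) (Pi.single j 1)).continuous).comp hf
    have hv : (fun j' : Fin n => if j' = j then (1:ℝ) else 0) = Pi.single j 1 := by
      ext j'; simp [Pi.single_apply]
    simp only [LinearMap.toMatrix'_apply, hv]
    exact (continuous_apply i).comp h1
  simp only [detAux_eq]
  exact (continuous_const.add (hMc.const_smul t)).matrix_det

end Aux

/-- Hadamard shape semiderivative of a domain integral:
`lim_{t→0⁺} (1/t)(∫_{F_t(Ω)} g_t − ∫_Ω g_0) = ∫_Ω (D_{Hm}g + div V · g_0)`. -/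
theorem hadamard_shape_semideriv_domain_integral
    (n : ℕ) (Ω : Set (Fin n → ℝ)) (hΩ : MeasurableSet Ω)
    (V : (Fin n → ℝ) → (Fin n → ℝ)) (hV : ContDiff ℝ 1 V)
    (L : NNReal) (hL : 0 < L) (hLip : LipschitzWith L V)
    -- `F_t = id + t·V` is injective for `0 ≤ t < 1/L` ...
    (hinj : ∀ t : ℝ, 0 ≤ t → t < 1 / (L : ℝ) →
      Function.Injective (fun x : Fin n → ℝ => x + t • V x))
    -- ... and `det(I + t·DV(x)) > 0` on `Ω` for such `t`
    (hdet : ∀ t : ℝ, 0 ≤ t → t < 1 / (L : ℝ) → ∀ x ∈ Ω,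
      0 < LinearMap.det
        (LinearMap.id + t • ((fderiv ℝ V x : (Fin n → ℝ) →L[ℝ] (Fin n → ℝ))
          : (Fin n → ℝ) →ₗ[ℝ] (Fin n → ℝ))))
    (g : ℝ → (Fin n → ℝ) → ℝ) (hmeas : ∀ t : ℝ, Measurable (g t))
    (hint : IntegrableOn (g 0) Ω)
    (Dmg : (Fin n → ℝ) → ℝ)
    -- (a) the material semiderivative exists almost everywhere on `Ω`
    (ha : ∀ᵐ x ∂(volume.restrict Ω),
      Tendsto (fun t => (g t (x + t • V x) - g 0 x) / t) (𝓝[>] (0 : ℝ)) (𝓝 (Dmg x)))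
    -- (b) a uniform integrable bound for the transported difference quotients
    (δ : ℝ) (hδ0 : 0 < δ) (hδL : δ < 1 / (L : ℝ))
    (G : (Fin n → ℝ) → ℝ) (hG : IntegrableOn G Ω)
    (hbound : ∀ t ∈ Set.Ioc (0 : ℝ) δ, ∀ᵐ x ∂(volume.restrict Ω),
      |g t (x + t • V x) * LinearMap.det
          (LinearMap.id + t • ((fderiv ℝ V x : (Fin n → ℝ) →L[ℝ] (Fin n → ℝ))
            : (Fin n → ℝ) →ₗ[ℝ] (Fin n → ℝ)))
        - g 0 x| ≤ t * G x) :
    Tendsto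
      (fun t => ((∫ y in (fun x : Fin n → ℝ => x + t • V x) '' Ω, g t y)
        - ∫ x in Ω, g 0 x) / t)
      (𝓝[>] (0 : ℝ))
      (𝓝 (∫ x in Ω, (Dmg x + (∑ i, fderiv ℝ V x (Pi.single i 1) i) * g 0 x))) := by
  set d : ℝ → (Fin n → ℝ) → ℝ := fun t x => LinearMap.det
      (LinearMap.id + t • ((fderiv ℝ V x : (Fin n → ℝ) →L[ℝ] (Fin n → ℝ))
        : (Fin n → ℝ) →ₗ[ℝ] (Fin n → ℝ))) with hd
  have hIoc : Set.Ioc (0 : ℝ) δ ∈ 𝓝[>] (0 : ℝ) := Ioc_mem_nhdsGT_of_mem ⟨le_refl 0, hδ0⟩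
  -- measurability of the transported integrand
  have hFc : ∀ t : ℝ, Continuous fun x : Fin n → ℝ => x + t • V x := fun t =>
    continuous_id.add (hV.continuous.const_smul t)
  have hdc : ∀ t : ℝ, Continuous fun x => d t x := fun t => detAux_continuous V hV t
  have hmeas_h : ∀ t : ℝ, AEStronglyMeasurable
      (fun x => (g t (x + t • V x) * d t x - g 0 x) / t) (volume.restrict Ω) := by
    intro t
    refine (Measurable.div_const ?_ t).aestronglyMeasurable
    exact (((hmeas t).comp (hFc t).measurable).mul (hdc t).measurable).sub (hmeas 0)
  -- integrability of the transported integrand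
  have hInt : ∀ t ∈ Set.Ioc (0 : ℝ) δ,
      IntegrableOn (fun x => g t (x + t • V x) * d t x) Ω := by
    intro t ht
    have hsub : IntegrableOn (fun x => g t (x + t • V x) * d t x - g 0 x) Ω := by
      refine Integrable.mono' (hG.const_mul t) ?_ ?_
      · exact ((((hmeas t).comp (hFc t).measurable).mul
          (hdc t).measurable).sub (hmeas 0)).aestronglyMeasurable
      · filter_upwards [hbound t ht] with x hx
        simpa [Real.norm_eq_abs] using hx
    have he : (fun x => g t (x + t • V x) * d t x)
        = fun x => (g t (x + t • V x) * d t x - g 0 x) + g 0 x := by ext x; ring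
    rw [he]; exact hsub.add hint
  -- the eventual identity via the change of variables formula
  have key : ∀ t ∈ Set.Ioc (0 : ℝ) δ,
      ((∫ y in (fun x : Fin n → ℝ => x + t • V x) '' Ω, g t y) - ∫ x in Ω, g 0 x) / t
        = ∫ x in Ω, (g t (x + t • V x) * d t x - g 0 x) / t := by
    intro t ht
    have ht0 : (0 : ℝ) < t := ht.1
    have htL : t < 1 / (L : ℝ) := lt_of_le_of_lt ht.2 hδL
    have hf' : ∀ x ∈ Ω, HasFDerivWithinAt (fun x : Fin n → ℝ => x + t • V x)
        (ContinuousLinearMap.id ℝ (Fin n → ℝ) + t • fderiv ℝ V x) Ω x := by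
      intro x _
      exact ((hasFDerivAt_id x).add
        (((hV.differentiable one_ne_zero) x).hasFDerivAt.const_smul t)).hasFDerivWithinAt
    have hCoV := integral_image_eq_integral_abs_det_fderiv_smul volume hΩ hf'
      ((hinj t ht0.le htL).injOn) (g t)
    rw [hCoV]
    have hdet_eq : Set.EqOn
        (fun x => |(ContinuousLinearMap.id ℝ (Fin n → ℝ) + t • fderiv ℝ V x).det|
          • g t (x + t • V x))
        (fun x => g t (x + t • V x) * d t x) Ω := by
      intro x hx
      have hpos := hdet t ht0.le htL x hx
      have hce : (ContinuousLinearMap.id ℝ (Fin n → ℝ) + t • fderiv ℝ V x).det = d t x := by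
        simp [ContinuousLinearMap.det, hd]
      simp only [hce, abs_of_pos (show 0 < d t x from hpos), smul_eq_mul, mul_comm]
    rw [setIntegral_congr_fun hΩ hdet_eq, integral_div, integral_sub (hInt t ht) hint]
  -- dominated convergence
  have hDC : Tendsto (fun t => ∫ x in Ω, (g t (x + t • V x) * d t x - g 0 x) / t)
      (𝓝[>] (0 : ℝ))
      (𝓝 (∫ x in Ω, (Dmg x + (∑ i, fderiv ℝ V x (Pi.single i 1) i) * g 0 x))) := by
    refine tendsto_integral_filter_of_dominated_convergence G
      (Eventually.of_forall hmeas_h) ?_ hG ?_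
    · filter_upwards [hIoc] with t ht
      filter_upwards [hbound t ht] with x hx
      rw [Real.norm_eq_abs, abs_div, abs_of_pos ht.1, div_le_iff₀ ht.1]
      calc |g t (x + t • V x) * d t x - g 0 x| ≤ t * G x := hx
        _ = G x * t := mul_comm _ _
    · filter_upwards [ha] with x hx
      have h1 : Tendsto (fun t => d t x) (𝓝[>] (0 : ℝ)) (𝓝 1) :=
        detAux_tendsto_one (fderiv ℝ V x)
      have h2 : Tendsto (fun t => (d t x - 1) / t) (𝓝[>] (0 : ℝ))
          (𝓝 (∑ i, fderiv ℝ V x (Pi.single i 1) i)) :=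
        detAux_diff_quot_tendsto (fderiv ℝ V x)
      have h3 : Tendsto (fun t => ((g t (x + t • V x) - g 0 x) / t) * d t x
          + g 0 x * ((d t x - 1) / t)) (𝓝[>] (0 : ℝ))
          (𝓝 (Dmg x * 1 + g 0 x * ∑ i, fderiv ℝ V x (Pi.single i 1) i)) :=
        (hx.mul h1).add (h2.const_mul (g 0 x))
      have heq : Dmg x * 1 + g 0 x * ∑ i, fderiv ℝ V x (Pi.single i 1) i
          = Dmg x + (∑ i, fderiv ℝ V x (Pi.single i 1) i) * g 0 x := by ring
      rw [heq] at h3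
      refine Tendsto.congr' ?_ h3
      filter_upwards [self_mem_nhdsWithin] with t ht
      have htne : t ≠ 0 := ne_of_gt ht
      field_simp
      ring
  refine Tendsto.congr' ?_ hDC
  filter_upwards [hIoc] with t ht
  exact (key t ht).symm
end
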